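/- Let d ≥ 1 and suppose there exists a stress-free d-dimensional sphere packing with contact graph G=(V,E). Then the set radii_d(G) has non-empty interior in ℝ^V, and there exists a d-dimensional sphere packing with contact graph G and generic radii. -/

import Mathlib

open Filter Topology
open scoped RealInnerProductSpace

noncomputable section

/-- A `d`-dimensional sphere packing with contact graph `G`, centres `p` and radii `r`:
the spheres have disjoint interiors and two spheres touch iff the vertices are adjacent. -/
def IsSpherePacking {V : Type*} (d : ℕ) (G : SimpleGraph V)
    (p : V → EuclideanSpace ℝ (Fin d)) (r : V → ℝ) : Prop :=
  (∀ v, 0 < r v) ∧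
  ∀ v w : V, v ≠ w →
    r v + r w ≤ dist (p v) (p w) ∧ (dist (p v) (p w) = r v + r w ↔ G.Adj v w)

/-- The radii are generic: injective and algebraically independent over `ℚ`. -/
def GenericRadii {V : Type*} (r : V → ℝ) : Prop :=
  Function.Injective r ∧ AlgebraicIndependent ℚ r

/-- The framework `(G, p)` is stress-free: every equilibrium stress
(a symmetric assignment of scalars to edges whose weighted differences sum to zero
at every vertex) is identically zero. -/
def IsStressFree {V : Type*} [Fintype V] {d : ℕ} (G : SimpleGraph V)
    (p : V → EuclideanSpace ℝ (Fin d)) : Prop :=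
  ∀ σ : V → V → ℝ,
    (∀ v w, σ v w = σ w v) →
    (∀ v w, ¬ G.Adj v w → σ v w = 0) →
    (∀ v, ∑ w : V, σ v w • (p v - p w) = 0) →
    ∀ v w, σ v w = 0

/-- The set of radii vectors admitting a `d`-dimensional sphere packing
with contact graph `G`. -/
def radiiSet {V : Type*} (d : ℕ) (G : SimpleGraph V) : Set (V → ℝ) :=
  {r | ∃ p, IsSpherePacking d G p r}


/-- Sum of a `dite` over a fintype equals the sum over the subtype. -/
lemma dite_sum_subtype {α M : Type*} [Fintype α] [AddCommMonoid M]
    (P : α → Prop) [DecidablePred P] (g : (a : α) → P a → M) :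
    (∑ a : α, if h : P a then g a h else 0) = ∑ e : Subtype P, g e.1 e.2 := by
  classical
  have h1 : (∑ a : α, if h : P a then g a h else 0)
      = ∑ a ∈ Finset.univ.filter P, if h : P a then g a h else 0 := by
    refine (Finset.sum_subset (Finset.filter_subset _ _) fun x _ hx => ?_).symm
    rw [dif_neg]
    simpa using hx
  rw [h1, ← Finset.sum_coe_sort]
  refine Fintype.sum_equiv (Equiv.subtypeEquivRight (fun x => by simp)) _ _ fun e => ?_
  simp only [Equiv.subtypeEquivRight_apply]
  exact dif_pos _

/-- A multivariate real polynomial vanishing on a box is zero. -/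
lemma mvpoly_eq_zero_of_eval_zero_on_ball :
    ∀ (n : ℕ) (P : MvPolynomial (Fin n) ℝ) (y : Fin n → ℝ) (ε : ℝ), 0 < ε →
    (∀ x : Fin n → ℝ, (∀ i, |x i - y i| < ε) → MvPolynomial.eval x P = 0) → P = 0 := by
  intro n
  induction n with
  | zero =>
    intro P y ε hε h
    obtain ⟨c, rfl⟩ := MvPolynomial.C_surjective (Fin 0) P
    have h0 := h y (fun i => i.elim0)
    simp only [MvPolynomial.eval_C] at h0
    rw [h0, map_zero]
  | succ n ih =>
    intro P y ε hε h
    set Q := MvPolynomial.finSuccEquiv ℝ n P with hQdef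
    have hcoeff : ∀ k : ℕ, Q.coeff k = 0 := by
      intro k
      refine ih (Q.coeff k) (fun j => y j.succ) ε hε ?_
      intro s hs
      have hpoly : Polynomial.map (MvPolynomial.eval s) Q = 0 := by
        refine Polynomial.eq_zero_of_infinite_isRoot _ ?_
        refine Set.Infinite.mono ?_ (Set.Ioo_infinite (show y 0 - ε < y 0 + ε by linarith))
        intro a ha
        set z : Fin (n + 1) → ℝ := Fin.cons a s with hz
        have hx : ∀ i : Fin (n + 1), |z i - y i| < ε := by
          intro i
          induction i using Fin.cases with
          | zero =>
            simp only [hz, Fin.cons_zero]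
            rw [abs_lt]
            constructor <;> [linarith [ha.1]; linarith [ha.2]]
          | succ j => simpa only [hz, Fin.cons_succ] using hs j
        have := h z hx
        rw [hz] at this
        rw [MvPolynomial.eval_eq_eval_mv_eval'] at this
        exact this
      have := congrArg (fun R => Polynomial.coeff R k) hpoly
      simpa [Polynomial.coeff_map] using this
    have hQ : Q = 0 := Polynomial.ext fun k => by simp [hcoeff k]
    refine (MvPolynomial.finSuccEquiv ℝ n).injective ?_
    rw [map_zero]
    exact hQ

/-- Any nonempty open set of `ℝ^V` contains an algebraically independent tuple over `ℚ`. -/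
lemma exists_algebraicIndependent_mem {V : Type*} [Fintype V] {U : Set (V → ℝ)}
    (hU : IsOpen U) (hne : U.Nonempty) : ∃ r ∈ U, AlgebraicIndependent ℚ r := by
  classical
  have hdense : ∀ P : MvPolynomial V ℝ, P ≠ 0 →
      Dense {x : V → ℝ | MvPolynomial.eval x P ≠ 0} := by
    intro P hP
    rw [dense_iff_inter_open]
    rintro W hW ⟨y₀, hy₀⟩
    by_contra hempty
    have h0 : ∀ x ∈ W, MvPolynomial.eval x P = 0 := by
      intro x hx
      by_contra hne0
      exact hempty ⟨x, hx, hne0⟩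
    obtain ⟨ε, hε, hball⟩ := Metric.isOpen_iff.1 hW y₀ hy₀
    set e := Fintype.equivFin V with he
    have hzero : MvPolynomial.rename e P = 0 := by
      refine mvpoly_eq_zero_of_eval_zero_on_ball (Fintype.card V) _
        (fun i => y₀ (e.symm i)) ε hε ?_
      intro x hx
      rw [MvPolynomial.eval_rename]
      refine h0 _ (hball ?_)
      rw [Metric.mem_ball, dist_pi_lt_iff hε]
      intro v
      have := hx (e v)
      simpa [Real.dist_eq, Equiv.symm_apply_apply] using this
    exact hP (MvPolynomial.rename_injective e e.injective (by rw [hzero, map_zero]))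
  haveI : Countable (MvPolynomial V ℚ) := by
    have : Countable ((V →₀ ℕ) →₀ ℚ) := inferInstance
    exact (AddMonoidAlgebra.coeff_injective (R := ℚ) (M := V →₀ ℕ)).countable
  have hBaire : Dense (⋂ P : {P : MvPolynomial V ℚ // P ≠ 0},
      {x : V → ℝ | MvPolynomial.eval x (MvPolynomial.map (algebraMap ℚ ℝ) P.1) ≠ 0}) := by
    refine dense_iInter_of_isOpen (fun P => ?_) (fun P => ?_)
    · exact isOpen_ne.preimage (MvPolynomial.continuous_eval _)
    · refine hdense _ ?_
      intro hzero
      exact P.2 (MvPolynomial.map_injective (algebraMap ℚ ℝ)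
        (algebraMap ℚ ℝ).injective (by rw [hzero, map_zero]))
  obtain ⟨r, hrU, hr⟩ := hBaire.inter_open_nonempty U hU hne
  refine ⟨r, hrU, algebraicIndependent_iff.2 fun Pq hPq => ?_⟩
  by_contra hne0
  have hmem := Set.mem_iInter.1 hr ⟨Pq, hne0⟩
  apply hmem
  rw [← MvPolynomial.eval₂_eq_eval_map]
  rw [MvPolynomial.aeval_def] at hPq
  exact hPq


/-- Local surjectivity from a surjective strict derivative. -/
lemma exists_local_right_inverse {X Y : Type*} [NormedAddCommGroup X] [NormedSpace ℝ X]
    [CompleteSpace X] [NormedAddCommGroup Y] [NormedSpace ℝ Y] [FiniteDimensional ℝ Y]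
    {f : X → Y} {D : X →L[ℝ] Y} {a : X} (hf : HasStrictFDerivAt f D a)
    (hsurj : LinearMap.range (D : X →ₗ[ℝ] Y) = ⊤) :
    ∃ Φ : Y → X, Filter.Tendsto Φ (𝓝 (f a)) (𝓝 a) ∧ ∀ᶠ y in 𝓝 (f a), f (Φ y) = y := by
  refine ⟨fun y => hf.implicitFunction f D hsurj y 0, ?_, ?_⟩
  · exact hf.tendsto_implicitFunction hsurj tendsto_id tendsto_const_nhds
  · have h := hf.map_implicitFunction_eq hsurj
    exact (tendsto_id.prodMk_nhds tendsto_const_nhds).eventually h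

lemma radiiSet_mem_nhds {V : Type*} [Fintype V] {d : ℕ} {G : SimpleGraph V}
    {p : V → EuclideanSpace ℝ (Fin d)} {r : V → ℝ}
    (hP : IsSpherePacking d G p r) (hsf : IsStressFree G p) : radiiSet d G ∈ 𝓝 r := by
  classical
  set eV := Fintype.equivFin V with heV
  set Pred : V × V → Prop := fun q => G.Adj q.1 q.2 ∧ eV q.1 < eV q.2 with hPreddef
  set L : Subtype Pred → ((V → EuclideanSpace ℝ (Fin d)) →L[ℝ] EuclideanSpace ℝ (Fin d)) :=
    fun e => (ContinuousLinearMap.proj e.1.1 :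
        (V → EuclideanSpace ℝ (Fin d)) →L[ℝ] EuclideanSpace ℝ (Fin d))
      - (ContinuousLinearMap.proj e.1.2 :
        (V → EuclideanSpace ℝ (Fin d)) →L[ℝ] EuclideanSpace ℝ (Fin d)) with hLdef
  have hL : ∀ (e : Subtype Pred) (q : V → EuclideanSpace ℝ (Fin d)),
      L e q = q e.1.1 - q e.1.2 := fun e q => rfl
  set f : (V → EuclideanSpace ℝ (Fin d)) → (Subtype Pred → ℝ) :=
    fun q e => ⟪L e q, L e q⟫ with hfdef
  set D : (V → EuclideanSpace ℝ (Fin d)) →L[ℝ] (Subtype Pred → ℝ) :=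
    ContinuousLinearMap.pi
      (fun e => (fderivInnerCLM ℝ (L e p, L e p)).comp ((L e).prod (L e))) with hDdef
  have hf : HasStrictFDerivAt f D p := by
    apply hasStrictFDerivAt_pi.2
    intro e
    exact ((L e).hasStrictFDerivAt.inner ℝ (L e).hasStrictFDerivAt)
  have hD : ∀ (q : V → EuclideanSpace ℝ (Fin d)) (e : Subtype Pred),
      D q e = 2 * ⟪L e p, L e q⟫ := by
    intro q e
    simp only [hDdef, ContinuousLinearMap.pi_apply, ContinuousLinearMap.comp_apply,
      ContinuousLinearMap.prod_apply, fderivInnerCLM_apply]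
    rw [real_inner_comm (L e q) (L e p)]
    ring
  -- surjectivity of the derivative
  have hsurj : LinearMap.range (D : (V → EuclideanSpace ℝ (Fin d)) →ₗ[ℝ] (Subtype Pred → ℝ)) = ⊤ := by
    by_contra hne
    obtain ⟨φ, hφ0, hφmap⟩ :=
      Submodule.exists_dual_map_eq_bot_of_lt_top (lt_top_iff_ne_top.2 hne) inferInstance
    have hker : ∀ q, φ (D q) = 0 := by
      intro q
      have hmem : φ (D q) ∈ Submodule.map φ (LinearMap.range (D : (V → EuclideanSpace ℝ (Fin d)) →ₗ[ℝ] (Subtype Pred → ℝ))) :=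
        Submodule.mem_map_of_mem (LinearMap.mem_range.2 ⟨q, rfl⟩)
      rw [hφmap] at hmem
      simpa using hmem
    set σ₀ : Subtype Pred → ℝ := fun e => φ (Pi.single e 1) with hσ₀def
    have hφexp : ∀ y : Subtype Pred → ℝ, φ y = ∑ e, y e * σ₀ e := by
      intro y
      conv_lhs => rw [← Finset.univ_sum_single y]
      rw [map_sum]
      refine Finset.sum_congr rfl fun e _ => ?_
      have hsingle : Pi.single e (y e) = y e • (Pi.single e (1 : ℝ) : Subtype Pred → ℝ) := by
        ext j
        by_cases hj : j = e
        · subst hj; simp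
        · simp [Pi.single_apply, hj]
      rw [hsingle, map_smul, smul_eq_mul]
    set T : V × V → ℝ := fun q => if h : Pred q then σ₀ ⟨q, h⟩ else 0 with hTdef
    have hTnadj : ∀ v w, ¬ G.Adj v w → T (v, w) = 0 := by
      intro v w h
      simp only [hTdef]
      exact dif_neg (fun hc => h hc.1)
    set σ : V → V → ℝ := fun v w => T (v, w) + T (w, v) with hσdef
    have hequil : ∀ u, ∑ w : V, σ u w • (p u - p w) = 0 := by
      intro u
      set x : EuclideanSpace ℝ (Fin d) := ∑ w : V, σ u w • (p u - p w) with hx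
      set g : V × V → EuclideanSpace ℝ (Fin d) := fun q =>
        (if q.1 = u then p u - p q.2 else 0) + (if q.2 = u then p u - p q.1 else 0) with hgdef
      have hsum : ∑ e : Subtype Pred, σ₀ e • g e.1 = x := by
        have h1 : ∑ e : Subtype Pred, σ₀ e • g e.1 = ∑ q : V × V, T q • g q := by
          rw [← dite_sum_subtype Pred (fun q h => σ₀ ⟨q, h⟩ • g q)]
          refine Finset.sum_congr rfl fun q _ => ?_
          by_cases h : Pred q
          · rw [dif_pos h]
            simp only [hTdef]
            rw [dif_pos h]
          · rw [dif_neg h]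
            simp only [hTdef]
            rw [dif_neg h, zero_smul]
        have h2 : ∀ v w : V, T (v, w) • g (v, w)
            = (if v = u then T (u, w) • (p u - p w) else 0)
              + (if w = u then T (v, u) • (p u - p v) else 0) := by
          intro v w
          by_cases hv : v = u <;> by_cases hw : w = u
          · rw [hv, hw, hTnadj u u (G.loopless.irrefl u)]
            simp
          · rw [hv]
            simp [hgdef, hw]
          · rw [hw]
            simp [hgdef, hv]
          · simp [hgdef, hv, hw]
        rw [h1, Fintype.sum_prod_type]
        calc (∑ v : V, ∑ w : V, T (v, w) • g (v, w))
            = ∑ v : V, ∑ w : V, ((if v = u then T (u, w) • (p u - p w) else 0)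
                + (if w = u then T (v, u) • (p u - p v) else 0)) :=
              Finset.sum_congr rfl fun v _ => Finset.sum_congr rfl fun w _ => h2 v w
          _ = (∑ v : V, ∑ w : V, if v = u then T (u, w) • (p u - p w) else 0)
                + ∑ v : V, ∑ w : V, if w = u then T (v, u) • (p u - p v) else 0 := by
              rw [← Finset.sum_add_distrib]
              exact Finset.sum_congr rfl fun v _ => Finset.sum_add_distrib
          _ = x := by
              have e1 : (∑ v : V, ∑ w : V, if v = u then T (u, w) • (p u - p w) else 0)
                  = ∑ w : V, T (u, w) • (p u - p w) := by
                have hh : ∀ v : V, (∑ w : V, if v = u then T (u, w) • (p u - p w) else 0)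
                    = if v = u then (∑ w : V, T (u, w) • (p u - p w)) else 0 := by
                  intro v; split_ifs <;> simp
                rw [Finset.sum_congr rfl fun v _ => hh v, Finset.sum_ite_eq' Finset.univ u]
                simp
              have e2 : (∑ v : V, ∑ w : V, if w = u then T (v, u) • (p u - p v) else 0)
                  = ∑ v : V, T (v, u) • (p u - p v) := by
                refine Finset.sum_congr rfl fun v _ => ?_
                rw [Finset.sum_ite_eq' Finset.univ u]
                simp
              rw [e1, e2, hx, ← Finset.sum_add_distrib]
              refine Finset.sum_congr rfl fun w _ => ?_
              simp only [hσdef]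
              rw [add_smul]
      have h0 := hker (Pi.single u x)
      rw [hφexp] at h0
      have h3 : ∀ e : Subtype Pred, ⟪L e p, L e (Pi.single u x)⟫ = ⟪g e.1, x⟫ := by
        intro e
        have hvw : e.1.1 ≠ e.1.2 := e.2.1.ne
        rw [hL, hL]
        by_cases hv : e.1.1 = u
        · have hw : e.1.2 ≠ u := fun h => hvw (by rw [hv, h])
          simp [hgdef, hv, hw, Pi.single_eq_same, Pi.single_eq_of_ne hw,
            inner_sub_left, inner_sub_right]
        · by_cases hw : e.1.2 = u
          · simp [hgdef, hv, hw, Pi.single_eq_same, Pi.single_eq_of_ne hv,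
              inner_sub_left, inner_sub_right, inner_neg_right]
          · simp [hgdef, hv, hw, Pi.single_eq_of_ne hv, Pi.single_eq_of_ne hw]
      have h4 : (∑ e, D (Pi.single u x) e * σ₀ e) = 2 * ⟪x, x⟫ := by
        have hh : ∀ e : Subtype Pred, D (Pi.single u x) e * σ₀ e
            = 2 * (σ₀ e * ⟪g e.1, x⟫) := by
          intro e
          rw [hD, h3]; ring
        rw [Finset.sum_congr rfl fun e _ => hh e, ← Finset.mul_sum]
        have hswap : (∑ e : Subtype Pred, σ₀ e * ⟪g e.1, x⟫)
            = ⟪∑ e : Subtype Pred, σ₀ e • g e.1, x⟫ := by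
          rw [sum_inner]
          exact Finset.sum_congr rfl fun e _ => (real_inner_smul_left _ _ _).symm
        rw [hswap, hsum]
      rw [h4] at h0
      have hxx : ⟪x, x⟫ = 0 := by linarith
      exact inner_self_eq_zero.1 hxx
    have hzero := hsf σ
      (fun v w => by simp only [hσdef]; exact add_comm _ _)
      (fun v w h => by
        have h' : ¬ G.Adj w v := fun hc => h hc.symm
        simp only [hσdef]
        rw [hTnadj v w h, hTnadj w v h', add_zero])
      hequil
    apply hφ0
    have hσ₀zero : ∀ e : Subtype Pred, σ₀ e = 0 := by
      rintro ⟨⟨v, w⟩, hpred⟩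
      have hz := hzero v w
      simp only [hσdef] at hz
      have hT1 : T (v, w) = σ₀ ⟨(v, w), hpred⟩ := by
        simp only [hTdef]; rw [dif_pos hpred]
      have hT2 : T (w, v) = 0 := by
        simp only [hTdef]
        rw [dif_neg]
        rintro ⟨-, hlt⟩
        exact absurd hpred.2 (not_lt.2 hlt.le)
      rw [hT1, hT2, add_zero] at hz
      exact hz
    refine LinearMap.ext fun y => ?_
    rw [hφexp]
    simp [hσ₀zero]
  -- the implicit function argument
  obtain ⟨Φ₀, hΦ₀t, hΦ₀f⟩ := exists_local_right_inverse hf hsurj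
  set c : (V → ℝ) → (Subtype Pred → ℝ) := fun r' e => (r' e.1.1 + r' e.1.2) ^ 2 with hcdef
  have hc : Continuous c := by
    rw [hcdef]
    refine continuous_pi fun e => ?_
    exact ((continuous_apply e.1.1).add (continuous_apply e.1.2)).pow 2
  have hcr : c r = f p := by
    funext e
    have hdist : dist (p e.1.1) (p e.1.2) = r e.1.1 + r e.1.2 :=
      (hP.2 _ _ e.2.1.ne).2.mpr e.2.1
    simp only [hcdef, hfdef]
    rw [hL, real_inner_self_eq_norm_sq, ← dist_eq_norm, hdist]
  set Φ : (V → ℝ) → (V → EuclideanSpace ℝ (Fin d)) := fun r' => Φ₀ (c r') with hΦdef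
  have hct : Filter.Tendsto c (𝓝 r) (𝓝 (f p)) := by
    rw [← hcr]; exact hc.tendsto r
  have hΦt : Filter.Tendsto Φ (𝓝 r) (𝓝 p) := hΦ₀t.comp hct
  have hev1 : ∀ᶠ r' in 𝓝 r, f (Φ r') = c r' := hct.eventually hΦ₀f
  have hev2 : ∀ᶠ r' in 𝓝 r, ∀ v, 0 < r' v :=
    Filter.eventually_all.2 fun v =>
      ((continuous_apply v).tendsto r).eventually (lt_mem_nhds (hP.1 v))
  have hev3 : ∀ᶠ r' in 𝓝 r, ∀ v w, v ≠ w → ¬ G.Adj v w →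
      r' v + r' w < dist (Φ r' v) (Φ r' w) := by
    refine Filter.eventually_all.2 fun v => Filter.eventually_all.2 fun w => ?_
    by_cases hcond : v ≠ w ∧ ¬ G.Adj v w
    · have hle := (hP.2 v w hcond.1).1
      have hne' : dist (p v) (p w) ≠ r v + r w := fun h => hcond.2 ((hP.2 v w hcond.1).2.mp h)
      have hlt : r v + r w < dist (p v) (p w) := lt_of_le_of_ne hle (Ne.symm hne')
      have t1 : Filter.Tendsto (fun r' : V → ℝ => r' v + r' w) (𝓝 r) (𝓝 (r v + r w)) :=
        ((continuous_apply v).tendsto r).add ((continuous_apply w).tendsto r)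
      have t2 : Filter.Tendsto (fun r' => dist (Φ r' v) (Φ r' w)) (𝓝 r)
          (𝓝 (dist (p v) (p w))) :=
        (((continuous_apply v).tendsto p).comp hΦt).dist
          (((continuous_apply w).tendsto p).comp hΦt)
      exact (t1.eventually_lt t2 hlt).mono fun r' h _ _ => h
    · exact Filter.Eventually.of_forall fun r' h1 h2 => absurd ⟨h1, h2⟩ hcond
  have hbig := hev1.and (hev2.and hev3)
  refine Filter.mem_of_superset hbig ?_
  rintro r' ⟨h1, h2, h3⟩
  refine ⟨Φ r', h2, ?_⟩
  intro v w hvw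
  by_cases hadj : G.Adj v w
  · have key : dist (Φ r' v) (Φ r' w) = r' v + r' w := by
      have hpos : 0 < r' v + r' w := add_pos (h2 v) (h2 w)
      have hEne : eV v ≠ eV w := fun h => hvw (eV.injective h)
      have hsq : dist (Φ r' v) (Φ r' w) ^ 2 = (r' v + r' w) ^ 2 := by
        rcases lt_or_gt_of_ne hEne with hlt | hlt
        · have hpred : Pred (v, w) := ⟨hadj, hlt⟩
          have hfe := congrFun h1 ⟨(v, w), hpred⟩
          simp only [hfdef, hcdef] at hfe
          rw [hL] at hfe
          rw [dist_eq_norm, ← real_inner_self_eq_norm_sq]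
          exact hfe
        · have hpred : Pred (w, v) := ⟨hadj.symm, hlt⟩
          have hfe := congrFun h1 ⟨(w, v), hpred⟩
          simp only [hfdef, hcdef] at hfe
          rw [hL] at hfe
          rw [dist_comm, dist_eq_norm, ← real_inner_self_eq_norm_sq, add_comm (r' v)]
          exact hfe
      have hfact : (dist (Φ r' v) (Φ r' w) - (r' v + r' w))
          * (dist (Φ r' v) (Φ r' w) + (r' v + r' w)) = 0 := by linear_combination hsq
      rcases mul_eq_zero.1 hfact with h | h
      · linarith
      · have := dist_nonneg (x := Φ r' v) (y := Φ r' w)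
        linarith
    exact ⟨le_of_eq key.symm, ⟨fun _ => hadj, fun _ => key⟩⟩
  · have hlt := h3 v w hvw hadj
    exact ⟨hlt.le, ⟨fun heq => absurd heq (ne_of_gt hlt), fun ha => absurd ha hadj⟩⟩

/-- If a stress-free `d`-dimensional sphere packing with contact graph `G` exists, then
`radii_d(G)` has non-empty interior and a generic-radii `d`-dimensional sphere packing
with contact graph `G` exists. -/
theorem radii_interior_of_stressFree {V : Type*} [Fintype V] (d : ℕ) (hd : 1 ≤ d)
    (G : SimpleGraph V) (p : V → EuclideanSpace ℝ (Fin d)) (r : V → ℝ)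
    (hP : IsSpherePacking d G p r) (hsf : IsStressFree G p) :
    (interior (radiiSet d G)).Nonempty ∧
    ∃ (p' : V → EuclideanSpace ℝ (Fin d)) (r' : V → ℝ),
      IsSpherePacking d G p' r' ∧ GenericRadii r' := by
  have hmem : radiiSet d G ∈ 𝓝 r := radiiSet_mem_nhds hP hsf
  have hint : r ∈ interior (radiiSet d G) := mem_interior_iff_mem_nhds.2 hmem
  refine ⟨⟨r, hint⟩, ?_⟩
  obtain ⟨r', hr'mem, hr'ind⟩ := exists_algebraicIndependent_mem isOpen_interior ⟨r, hint⟩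
  obtain ⟨p', hp'⟩ := interior_subset hr'mem
  exact ⟨p', r', hp', hr'ind.injective, hr'ind⟩

end
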